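/- Every bounded monotone function ψ : Spec R → ℤ is an iterated mutation of a constant function: if the image of ψ lies in (a, b], then ψ = μ⁻_{W_{b-1}} ∘ ⋯ ∘ μ⁻_{W_{a+1}} applied to the constant function a+1, where W_k = ψ⁻¹((k, ∞)), and each W_k is specialization-closed. -/
import Mathlib


open scoped Classical in
/-- The (right) mutation of a function ψ : Spec R → ℤ at a subset W ⊆ Spec R. -/
noncomputable def mutate {R : Type*} [CommRing R] (W : Set (PrimeSpectrum R))
    (ψ : PrimeSpectrum R → ℤ) : PrimeSpectrum R → ℤ :=
  fun p => if p ∈ W then ψ p + 1 else ψ p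

/-- Iterated mutation: starting from the constant function a + 1, the (i+1)-st step
mutates at W_{a+1+i} = ψ⁻¹((a+1+i, ∞)). -/
noncomputable def iterMutate {R : Type*} [CommRing R] (ψ : PrimeSpectrum R → ℤ) (a : ℤ) :
    ℕ → (PrimeSpectrum R → ℤ)
  | 0 => fun _ => a + 1
  | (i + 1) => mutate {p | (a + 1 + (i : ℤ)) < ψ p} (iterMutate ψ a i)

/-- every bounded monotone ψ : Spec R → ℤ with image in (a, b] is the
iterated mutation μ⁻_{W_{b-1}} ∘ ⋯ ∘ μ⁻_{W_{a+1}} of the constant function a + 1, where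
W_k = ψ⁻¹((k, ∞)); each W_k is specialization-closed. -/

lemma iterMutate_eq_min {R : Type*} [CommRing R] (ψ : PrimeSpectrum R → ℤ) (a : ℤ)
    (n : ℕ) (p : PrimeSpectrum R) (ha : a < ψ p) :
    iterMutate ψ a n p = min (ψ p) (a + 1 + n) := by
  induction n with
  | zero => simp [iterMutate]; omega
  | succ i ih =>
    simp only [iterMutate, mutate, Set.mem_setOf_eq, ih]
    push_cast
    split <;> omega

theorem monotone_is_iterated_mutation_of_constant {R : Type*} [CommRing R]
    (ψ : PrimeSpectrum R → ℤ) (hmono : Monotone ψ)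
    (a b : ℤ) (hψ : ∀ p, a < ψ p ∧ ψ p ≤ b) :
    (∀ k : ℤ, IsUpperSet {p : PrimeSpectrum R | k < ψ p}) ∧
    iterMutate ψ a (b - 1 - a).toNat = ψ := by
  refine ⟨fun k p q hpq hp => lt_of_lt_of_le hp (hmono hpq), funext fun p => ?_⟩
  obtain ⟨h1, h2⟩ := hψ p
  rw [iterMutate_eq_min ψ a _ p h1]
  have hb : a + 1 + ((b - 1 - a).toNat : ℤ) = b := by omega
  rw [hb]; omega
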